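/- Under Assumption 1, if p^- is finite (i.e., p^- ∈ ℝ), then q^- = p^-. -/

import Mathlib

open Matrix

/-- The perturbed primal feasible set `P(b) = {x : Âx = b̂ + b, x ≥ 0}`. -/
def Pfeas (m n : ℕ) (Ahat : Matrix (Fin m) (Fin n) ℝ) (bhat b : Fin m → ℝ) :
    Set (Fin n → ℝ) :=
  {x | Ahat.mulVec x = bhat + b ∧ 0 ≤ x}

/-- The perturbed dual feasible set `D(c) = {(y,s) : Âᵀy + s = ĉ + c, s ≥ 0}`. -/
def Dfeas (m n : ℕ) (Ahat : Matrix (Fin m) (Fin n) ℝ) (chat c : Fin n → ℝ) :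
    Set ((Fin m → ℝ) × (Fin n → ℝ)) :=
  {ys | Ahat.transpose.mulVec ys.1 + ys.2 = chat + c ∧ 0 ≤ ys.2}

/-- The perturbed optimal value `p(b,c)` as an extended real number
(`sInf ∅ = +∞` in `EReal`). -/
noncomputable def pval (m n : ℕ) (Ahat : Matrix (Fin m) (Fin n) ℝ)
    (bhat b : Fin m → ℝ) (chat c : Fin n → ℝ) : EReal :=
  sInf ((fun x => (((chat + c) ⬝ᵥ x : ℝ) : EReal)) '' Pfeas m n Ahat bhat b)

/-- The restricted uncertainty set `Ū = {(b,c) ∈ U : P(b) ≠ ∅, D(c) ≠ ∅}`. -/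
def Ubar (m n : ℕ) (Ahat : Matrix (Fin m) (Fin n) ℝ) (bhat : Fin m → ℝ)
    (chat : Fin n → ℝ) (U : Set ((Fin m → ℝ) × (Fin n → ℝ))) :
    Set ((Fin m → ℝ) × (Fin n → ℝ)) :=
  {bc ∈ U | (Pfeas m n Ahat bhat bc.1).Nonempty ∧ (Dfeas m n Ahat chat bc.2).Nonempty}


/-- The cone generated by a finite family of vectors. -/
def coneSet {k n : ℕ} (v : Fin k → (Fin n → ℝ)) : Set (Fin n → ℝ) :=
  {x | ∃ t : Fin k → ℝ, 0 ≤ t ∧ x = ∑ i, t i • v i}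

lemma coneSet_isClosed_of_li {k n : ℕ} (v : Fin k → (Fin n → ℝ))
    (hv : LinearIndependent ℝ v) : IsClosed (coneSet v) := by
  classical
  let L : (Fin k → ℝ) →ₗ[ℝ] (Fin n → ℝ) :=
    { toFun := fun t => ∑ i, t i • v i
      map_add' := by
        intro a b
        simp [add_smul, Finset.sum_add_distrib]
      map_smul' := by
        intro c a
        simp [smul_smul, Finset.smul_sum] }
  have hker : LinearMap.ker L = ⊥ := by
    rw [LinearMap.ker_eq_bot']
    intro t ht
    funext i
    exact Fintype.linearIndependent_iff.mp hv t ht i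
  have hL := LinearMap.isClosedEmbedding_of_injective hker
  have hclosed : IsClosed {t : Fin k → ℝ | 0 ≤ t} := by
    have : {t : Fin k → ℝ | 0 ≤ t} = ⋂ i, (fun t : Fin k → ℝ => t i) ⁻¹' Set.Ici 0 := by
      ext t; simp [Pi.le_def]
    rw [this]
    exact isClosed_iInter fun i => isClosed_Ici.preimage (continuous_apply i)
  have himg : coneSet v = L '' {t : Fin k → ℝ | 0 ≤ t} := by
    ext x
    constructor
    · rintro ⟨t, ht, rfl⟩; exact ⟨t, ht, rfl⟩
    · rintro ⟨t, ht, rfl⟩; exact ⟨t, ht, rfl⟩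
  rw [himg]
  exact hL.isClosedMap _ hclosed

lemma coneSet_isClosed_fin {n : ℕ} : ∀ (k : ℕ) (v : Fin k → (Fin n → ℝ)), IsClosed (coneSet v) := by
  intro k
  induction k with
  | zero => exact fun v => coneSet_isClosed_of_li v linearIndependent_empty_type
  | succ k ih =>
    intro v
    by_cases hv : LinearIndependent ℝ v
    · exact coneSet_isClosed_of_li v hv
    · obtain ⟨g, hg0, i0, hi0⟩ := Fintype.not_linearIndependent_iff.mp hv
      obtain ⟨a, ha_sum, j0, hj0⟩ :
          ∃ a : Fin (k + 1) → ℝ, ∑ i, a i • v i = 0 ∧ ∃ j, a j < 0 := by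
        rcases lt_or_gt_of_ne hi0 with h | h
        · exact ⟨g, hg0, i0, h⟩
        · refine ⟨-g, ?_, i0, by simpa using h⟩
          simp only [Pi.neg_apply, neg_smul]
          rw [Finset.sum_neg_distrib, hg0, neg_zero]
      have key : coneSet v = ⋃ i ∈ {i : Fin (k + 1) | a i < 0},
          coneSet (v ∘ i.succAbove) := by
        ext x
        constructor
        · rintro ⟨t, ht, rfl⟩
          classical
          set S : Finset (Fin (k + 1)) := Finset.univ.filter (fun j => a j < 0) with hS
          have hSne : S.Nonempty := ⟨j0, by simp [hS, hj0]⟩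
          obtain ⟨i, hiS, hmin⟩ := S.exists_min_image (fun j => t j / (-a j)) hSne
          have hai : a i < 0 := by simpa [hS] using hiS
          set lam : ℝ := t i / (-a i) with hlam
          have hlam0 : 0 ≤ lam := div_nonneg (ht i) (by linarith)
          set t' : Fin (k + 1) → ℝ := fun j => t j + lam * a j with ht'
          have ht'0 : ∀ j, 0 ≤ t' j := by
            intro j
            rcases lt_or_ge (a j) 0 with h | h
            · have := hmin j (by simp [hS, h])
              have h2 : lam * (-a j) ≤ t j := by
                rw [← le_div_iff₀ (by linarith : (0:ℝ) < -a j)]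
                exact this
              simp only [ht']
              nlinarith
            · exact add_nonneg (ht j) (mul_nonneg hlam0 h)
          have ht'i : t' i = 0 := by
            have hne : -a i ≠ 0 := by linarith
            simp only [ht', hlam]
            field_simp
            rw [div_self (by linarith : a i ≠ 0)]; ring
          have hsum : ∑ j, t' j • v j = ∑ j, t j • v j := by
            simp only [ht', add_smul, Finset.sum_add_distrib]
            have : ∑ j, (lam * a j) • v j = lam • ∑ j, a j • v j := by
              rw [Finset.smul_sum]; simp [smul_smul]
            rw [this, ha_sum, smul_zero, add_zero]
          refine Set.mem_biUnion (show i ∈ {i : Fin (k+1) | a i < 0} from hai) ?_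
          refine ⟨t' ∘ i.succAbove, fun j => ht'0 _, ?_⟩
          have := Fin.sum_univ_succAbove (fun j => t' j • v j) i
          rw [hsum, ht'i, zero_smul, zero_add] at this
          simpa [Function.comp] using this
        · rintro hx
          simp only [Set.mem_iUnion] at hx
          obtain ⟨i, hi, t, ht, rfl⟩ := hx
          refine ⟨(i.insertNth (0:ℝ) t : Fin (k+1) → ℝ), ?_, ?_⟩
          · intro j
            rcases eq_or_ne j i with rfl | hj
            · simp
            · obtain ⟨l, rfl⟩ := Fin.exists_succAbove_eq hj
              simpa using ht l
          · rw [Fin.sum_univ_succAbove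
              (fun j => (i.insertNth (0:ℝ) t : Fin (k+1) → ℝ) j • v j) i]
            simp [Function.comp]
      rw [key]
      exact Set.Finite.isClosed_biUnion (Set.toFinite _) fun i _ => ih _

lemma coneSet_general_isClosed {n : ℕ} {ι : Type} [Fintype ι] (v : ι → (Fin n → ℝ)) :
    IsClosed {x : Fin n → ℝ | ∃ t : ι → ℝ, 0 ≤ t ∧ x = ∑ i, t i • v i} := by
  classical
  let e := Fintype.equivFin ι
  have h : {x : Fin n → ℝ | ∃ t : ι → ℝ, 0 ≤ t ∧ x = ∑ i, t i • v i}
      = coneSet (v ∘ e.symm) := by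
    ext x
    constructor
    · rintro ⟨t, ht, rfl⟩
      exact ⟨t ∘ e.symm, fun j => ht _, (Equiv.sum_comp e.symm fun i => t i • v i).symm⟩
    · rintro ⟨t, ht, rfl⟩
      refine ⟨t ∘ e, fun j => ht _, ?_⟩
      rw [← Equiv.sum_comp e (fun j => t j • (v ∘ e.symm) j)]
      simp
  rw [h]; exact coneSet_isClosed_fin _ _

lemma transpose_mulVec_eq_sum {m n : ℕ} (A : Matrix (Fin m) (Fin n) ℝ) (y : Fin m → ℝ) :
    A.transpose.mulVec y = ∑ i, y i • A i := by
  ext j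
  simp [Matrix.mulVec, dotProduct, Matrix.transpose_apply, Finset.sum_apply, mul_comm]

/-- The generating family of the cone `{Aᵀy + s : s ≥ 0}`. -/
def genFam (m n : ℕ) (A : Matrix (Fin m) (Fin n) ℝ) :
    ((Fin m ⊕ Fin m) ⊕ Fin n) → (Fin n → ℝ) :=
  Sum.elim (Sum.elim (fun i => A i) (fun i => -(A i))) (fun j => Pi.single j 1)

open scoped RealInnerProductSpace in
lemma farkas_ray {m n : ℕ} (A : Matrix (Fin m) (Fin n) ℝ) (c' : Fin n → ℝ)
    (h : ¬ ∃ y : Fin m → ℝ, ∃ s : Fin n → ℝ, A.transpose.mulVec y + s = c' ∧ 0 ≤ s) :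
    ∃ d : Fin n → ℝ, 0 ≤ d ∧ A.mulVec d = 0 ∧ c' ⬝ᵥ d < 0 := by
  classical
  set w := genFam m n A with hw
  set Kset : Set (Fin n → ℝ) :=
    {x | ∃ t : ((Fin m ⊕ Fin m) ⊕ Fin n) → ℝ, 0 ≤ t ∧ x = ∑ i, t i • w i} with hKset
  have hKclosed : IsClosed Kset := coneSet_general_isClosed w
  have hgen : ∀ i0, w i0 ∈ Kset := by
    intro i0
    refine ⟨fun l => if l = i0 then 1 else 0,
      fun l => by by_cases hl : l = i0 <;> simp [hl], ?_⟩
    have : ∑ l, (if l = i0 then (1:ℝ) else 0) • w l = w i0 := by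
      simp [ite_smul]
    exact this.symm
  let K : ConvexCone ℝ (EuclideanSpace ℝ (Fin n)) :=
    { carrier := WithLp.ofLp ⁻¹' Kset
      smul_mem' := by
        rintro c hc x ⟨t, ht, hx⟩
        refine ⟨c • t, fun l => mul_nonneg hc.le (ht l), ?_⟩
        rw [WithLp.ofLp_smul, hx, Finset.smul_sum]
        simp [smul_smul]
      add_mem' := by
        rintro x ⟨t, ht, hx⟩ y ⟨u, hu, hy⟩
        exact ⟨t + u, fun l => add_nonneg (ht l) (hu l),
          by simp [hx, hy, add_smul, Finset.sum_add_distrib]⟩ }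
  have hc' : (WithLp.toLp 2 c' : EuclideanSpace ℝ (Fin n)) ∉ K := by
    rintro ⟨t, ht, hrep⟩
    change c' = _ at hrep
    apply h
    refine ⟨fun i => t (Sum.inl (Sum.inl i)) - t (Sum.inl (Sum.inr i)),
      fun j => t (Sum.inr j), ?_, fun j => ht _⟩
    have hsingle : ∑ j, t (Sum.inr j) • (Pi.single j 1 : Fin n → ℝ)
        = fun j => t (Sum.inr j) := by
      ext j'
      simp [Finset.sum_apply, Pi.single_apply]
    have hrep' : c' = ∑ i, t (Sum.inl (Sum.inl i)) • A i
        + ∑ i, t (Sum.inl (Sum.inr i)) • (-(A i)) + (fun j => t (Sum.inr j)) := by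
      rw [hrep, Fintype.sum_sum_type, Fintype.sum_sum_type]
      simp only [hw, genFam, Sum.elim_inl, Sum.elim_inr]
      rw [hsingle]
    rw [transpose_mulVec_eq_sum, hrep']
    funext j'
    simp only [Finset.sum_apply, Pi.add_apply, Pi.smul_apply, Pi.neg_apply, smul_eq_mul,
      sub_mul, Finset.sum_sub_distrib, mul_neg]
    ring_nf
    rw [Finset.sum_neg_distrib]
    ring
  obtain ⟨d, hd1, hd2⟩ :=
    ProperCone.hyperplane_separation'
      (⟨K.toPointedCone ⟨0, le_refl 0, by simp⟩, hKclosed.preimage (by fun_prop)⟩ :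
        ProperCone ℝ (EuclideanSpace ℝ (Fin n))) hc'
  have hinner : ∀ x : EuclideanSpace ℝ (Fin n), ⟪x, d⟫ = ∑ j, x j * d j := by
    intro x; simp [PiLp.inner_apply, mul_comm]
  have hd0 : (0 : Fin n → ℝ) ≤ WithLp.ofLp d := by
    intro j
    have := hd1 (WithLp.toLp 2 (w (Sum.inr j))) (hgen (Sum.inr j))
    rw [hinner] at this
    simpa [hw, genFam, Pi.single_apply, ite_mul] using this
  have hAd : A.mulVec (WithLp.ofLp d) = 0 := by
    funext i
    have h1 := hd1 (WithLp.toLp 2 (w (Sum.inl (Sum.inl i)))) (hgen (Sum.inl (Sum.inl i)))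
    have h2 := hd1 (WithLp.toLp 2 (w (Sum.inl (Sum.inr i)))) (hgen (Sum.inl (Sum.inr i)))
    rw [hinner] at h1 h2
    simp only [hw, genFam, Sum.elim_inl, Sum.elim_inr, Pi.neg_apply, neg_mul,
      Finset.sum_neg_distrib, Right.nonneg_neg_iff] at h1 h2
    have : ∑ j, A i j * d j = 0 := le_antisymm h2 h1
    simpa [Matrix.mulVec, dotProduct] using this
  refine ⟨WithLp.ofLp d, hd0, hAd, ?_⟩
  have : ⟪d, (WithLp.toLp 2 c' : EuclideanSpace ℝ (Fin n))⟫ < 0 := by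
    rw [real_inner_comm]; exact hd2
  rw [real_inner_comm, hinner] at this
  simpa [dotProduct, mul_comm] using this

lemma pval_eq_bot {m n : ℕ} (Ahat : Matrix (Fin m) (Fin n) ℝ) (bhat b : Fin m → ℝ)
    (chat c : Fin n → ℝ) (hP : (Pfeas m n Ahat bhat b).Nonempty)
    (hD : ¬ (Dfeas m n Ahat chat c).Nonempty) :
    pval m n Ahat bhat b chat c = ⊥ := by
  obtain ⟨x0, hx0A, hx0pos⟩ := hP
  have hnd : ¬ ∃ y : Fin m → ℝ, ∃ s : Fin n → ℝ,
      Ahat.transpose.mulVec y + s = chat + c ∧ 0 ≤ s := by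
    rintro ⟨y, s, h1, h2⟩; exact hD ⟨(y, s), h1, h2⟩
  obtain ⟨d, hd0, hAd, hcd⟩ := farkas_ray Ahat (chat + c) hnd
  rw [pval, EReal.eq_bot_iff_forall_lt]
  intro r
  set v0 := (chat + c) ⬝ᵥ x0 with hv0
  set δ := (chat + c) ⬝ᵥ d with hδ
  obtain ⟨τ, hτ0, hτ⟩ : ∃ τ : ℝ, 0 ≤ τ ∧ v0 + τ * δ < r := by
    rcases le_or_gt 0 ((r - 1 - v0) / δ) with hq | hq
    · refine ⟨(r - 1 - v0) / δ, hq, ?_⟩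
      rw [div_mul_cancel₀ _ (ne_of_lt hcd)]
      linarith
    · refine ⟨0, le_refl 0, ?_⟩
      rcases div_neg_iff.mp hq with ⟨h1, _⟩ | ⟨_, h2⟩
      · linarith
      · linarith
  have hmem : x0 + τ • d ∈ Pfeas m n Ahat bhat b := by
    constructor
    · rw [Matrix.mulVec_add, Matrix.mulVec_smul, hAd, smul_zero, add_zero, hx0A]
    · exact add_nonneg hx0pos (smul_nonneg hτ0 hd0)
  have hval : (chat + c) ⬝ᵥ (x0 + τ • d) = v0 + τ * δ := by
    rw [dotProduct_add, dotProduct_smul, smul_eq_mul]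
  calc sInf ((fun x => (((chat + c) ⬝ᵥ x : ℝ) : EReal)) '' Pfeas m n Ahat bhat b)
      ≤ (((chat + c) ⬝ᵥ (x0 + τ • d) : ℝ) : EReal) := sInf_le ⟨_, hmem, rfl⟩
    _ < (r : EReal) := by rw [hval]; exact_mod_cast hτ

/-- Under Assumption 1 (`U` compact, convex, containing `(0,0)`),
if `p⁻ = inf{p(b,c) : (b,c) ∈ U}` is a finite real number, then
`q⁻ = inf{p(b,c) : (b,c) ∈ Ū}` equals `p⁻`. -/
theorem q_minus_eq_p_minus_of_finite (m n : ℕ)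
    (Ahat : Matrix (Fin m) (Fin n) ℝ) (bhat : Fin m → ℝ) (chat : Fin n → ℝ)
    (U : Set ((Fin m → ℝ) × (Fin n → ℝ)))
    (hUcompact : IsCompact U) (hUconvex : Convex ℝ U) (hU0 : (0, 0) ∈ U)
    (hfin : ∃ v : ℝ,
      sInf ((fun bc => pval m n Ahat bhat bc.1 chat bc.2) '' U) = (v : EReal)) :
    sInf ((fun bc => pval m n Ahat bhat bc.1 chat bc.2) ''
        Ubar m n Ahat bhat chat U) =
      sInf ((fun bc => pval m n Ahat bhat bc.1 chat bc.2) '' U) := by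
  obtain ⟨v, hv⟩ := hfin
  refine le_antisymm ?_ (sInf_le_sInf (Set.image_mono fun bc hbc => hbc.1))
  refine le_sInf ?_
  rintro z ⟨bc, hbcU, rfl⟩
  by_cases hP : (Pfeas m n Ahat bhat bc.1).Nonempty
  · by_cases hD : (Dfeas m n Ahat chat bc.2).Nonempty
    · exact sInf_le ⟨bc, ⟨hbcU, hP, hD⟩, rfl⟩
    · exfalso
      have hbot : pval m n Ahat bhat bc.1 chat bc.2 = ⊥ :=
        pval_eq_bot Ahat bhat bc.1 chat bc.2 hP hD
      have : sInf ((fun bc => pval m n Ahat bhat bc.1 chat bc.2) '' U) = ⊥ :=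
        le_bot_iff.mp (hbot ▸ sInf_le ⟨bc, hbcU, rfl⟩)
      rw [hv] at this
      exact EReal.coe_ne_bot v this
  · have : Pfeas m n Ahat bhat bc.1 = ∅ := Set.not_nonempty_iff_eq_empty.mp hP
    have htop : pval m n Ahat bhat bc.1 chat bc.2 = ⊤ := by
      rw [pval, this, Set.image_empty, sInf_empty]
    show sInf _ ≤ pval m n Ahat bhat bc.1 chat bc.2
    rw [htop]
    exact le_top
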